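/- Fix λ ∈ ℝ and define F : ℝ^K → ℝ^K by F_i(u) = λ − u_i·exp(−Σ_{j∈V_i} u_j). Let z : [0,∞) → ℝ^K be differentiable with z(t) ∈ H = {x : x_i > 0 ∀i} and z'(t) = F(φ(z(t))) for all t ≥ 0. Then there exists an increasing continuous bijection ν : [0,∞) → [0,∞), differentiable with ν'(t) = Σ_{j=1}^K z_j(ν(t)), such that the function w(t) = z(ν(t)) / Σ_{j=1}^K z_j(ν(t)) satisfies, for all t ≥ 0, w'(t) = F(φ(w(t))) − (Σ_{k=1}^K F_k(φ(w(t))))·w(t). -/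

import Mathlib

open Finset

/-- The closed neighbourhood `V_i = {i} ∪ {j : (i,j) ∈ E}` of a vertex `i`. -/
def closedNbhd {K : ℕ} (G : SimpleGraph (Fin K)) [DecidableRel G.Adj] (i : Fin K) :
    Finset (Fin K) :=
  insert i (G.neighborFinset i)

/-- `φ_i(x) = x_i / ∑_{j ∈ V_i} x_j`. -/
noncomputable def phi {K : ℕ} (G : SimpleGraph (Fin K)) [DecidableRel G.Adj]
    (x : Fin K → ℝ) (i : Fin K) : ℝ :=
  x i / ∑ j ∈ closedNbhd G i, x j

/-- `F_i(u) = λ − u_i exp(−∑_{j∈V_i} u_j)`. -/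
noncomputable def Ffun {K : ℕ} (G : SimpleGraph (Fin K)) [DecidableRel G.Adj]
    (lam : ℝ) (u : Fin K → ℝ) (i : Fin K) : ℝ :=
  lam - u i * Real.exp (-∑ j ∈ closedNbhd G i, u j)

lemma phi_smul {K : ℕ} (G : SimpleGraph (Fin K)) [DecidableRel G.Adj]
    {c : ℝ} (hc : c ≠ 0) (x : Fin K → ℝ) : phi G (c • x) = phi G x := by
  funext i
  simp only [phi, Pi.smul_apply, smul_eq_mul, ← Finset.mul_sum]
  rw [mul_div_mul_left _ _ hc]

lemma Ffun_abs_le {K : ℕ} (G : SimpleGraph (Fin K)) [DecidableRel G.Adj]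
    (lam : ℝ) {x : Fin K → ℝ} (hx : ∀ i, 0 < x i) (i : Fin K) :
    |Ffun G lam (phi G x) i| ≤ |lam| + 1 := by
  have hiV : i ∈ closedNbhd G i := Finset.mem_insert_self _ _
  have hphi_pos : ∀ j, 0 ≤ phi G x j := by
    intro j
    exact div_nonneg (hx j).le (Finset.sum_nonneg fun k _ => (hx k).le)
  have hphi_le : phi G x i ≤ 1 := by
    rw [phi, div_le_one]
    · exact Finset.single_le_sum (fun k _ => (hx k).le) hiV
    · exact Finset.sum_pos (fun k _ => hx k) ⟨i, hiV⟩
  have hexp : Real.exp (-∑ j ∈ closedNbhd G i, phi G x j) ≤ 1 := by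
    rw [Real.exp_le_one_iff]
    simp only [neg_nonpos]
    exact Finset.sum_nonneg fun k _ => hphi_pos k
  have h1 : |phi G x i * Real.exp (-∑ j ∈ closedNbhd G i, phi G x j)| ≤ 1 := by
    rw [abs_of_nonneg (mul_nonneg (hphi_pos i) (Real.exp_pos _).le)]
    exact mul_le_one₀ hphi_le (Real.exp_pos _).le hexp
  calc |Ffun G lam (phi G x) i| ≤ |lam| + |phi G x i * Real.exp (-∑ j ∈ closedNbhd G i, phi G x j)| :=
        abs_sub _ _
    _ ≤ |lam| + 1 := by linarith

theorem stmt16 {K : ℕ} (G : SimpleGraph (Fin K)) [DecidableRel G.Adj]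
    (hconn : G.Connected) (lam : ℝ)
    (z : ℝ → Fin K → ℝ)
    (hpos : ∀ t : ℝ, 0 ≤ t → ∀ i, 0 < z t i)
    (hderiv : ∀ t : ℝ, 0 ≤ t →
      HasDerivWithinAt z (Ffun G lam (phi G (z t))) (Set.Ici 0) t) :
    ∃ ν : ℝ → ℝ,
      Set.BijOn ν (Set.Ici 0) (Set.Ici 0) ∧
      StrictMonoOn ν (Set.Ici 0) ∧
      ContinuousOn ν (Set.Ici 0) ∧
      (∀ t : ℝ, 0 ≤ t → HasDerivWithinAt ν (∑ j, z (ν t) j) (Set.Ici 0) t) ∧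
      (∀ t : ℝ, 0 ≤ t → ∀ w : Fin K → ℝ, w = (∑ j, z (ν t) j)⁻¹ • z (ν t) →
        HasDerivWithinAt (fun s => (∑ j, z (ν s) j)⁻¹ • z (ν s))
          (Ffun G lam (phi G w) - (∑ k, Ffun G lam (phi G w) k) • w)
          (Set.Ici 0) t) := by
  classical
  have hK : Nonempty (Fin K) := hconn.nonempty
  have hKpos : 0 < K := by rcases hK with ⟨i⟩; exact i.pos
  set C : ℝ := K * (|lam| + 1) with hCdef
  have hCpos : 0 < C := by positivity
  -- continuity of z on Ici 0
  have hzc : ContinuousOn z (Set.Ici 0) := fun t ht =>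
    (hderiv t ht).continuousWithinAt
  -- extended sum S
  set S : ℝ → ℝ := fun s => ∑ j, z (max s 0) j with hSdef
  have hmax : ∀ s : ℝ, 0 ≤ s → max s 0 = s := fun s hs => max_eq_left hs
  have hSc : Continuous S := by
    have hZ : Continuous fun s : ℝ => z (max s 0) := by
      rw [← continuousOn_univ]
      exact hzc.comp ((continuous_id.max continuous_const).continuousOn)
        (fun s _ => le_max_right s 0)
    exact continuous_finset_sum _ fun j _ => (continuous_apply j).comp hZ
  have hSpos : ∀ s, 0 < S s :=
    fun s => Finset.sum_pos (fun j _ => hpos _ (le_max_right s 0) j) Finset.univ_nonempty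
  have hSeq : ∀ s, 0 ≤ s → S s = ∑ j, z s j := fun s hs => by
    simp [hSdef, hmax s hs]
  -- derivative of the sum on Ici 0
  have hSsum_deriv : ∀ s, 0 ≤ s →
      HasDerivWithinAt (fun u => ∑ j, z u j)
        (∑ k, Ffun G lam (phi G (z s)) k) (Set.Ici 0) s := by
    intro s hs
    exact HasDerivWithinAt.fun_sum fun j _ => (hasDerivWithinAt_pi.mp (hderiv s hs)) j
  -- linear growth bound
  have hSle : ∀ s, 0 ≤ s → S s ≤ S 0 + C * s := by
    intro s hs
    have hb : ∀ u ∈ Set.Ici (0:ℝ), ‖∑ k, Ffun G lam (phi G (z u)) k‖ ≤ C := by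
      intro u hu
      calc ‖∑ k, Ffun G lam (phi G (z u)) k‖ ≤ ∑ k, ‖Ffun G lam (phi G (z u)) k‖ :=
            norm_sum_le _ _
        _ ≤ ∑ _k : Fin K, (|lam| + 1) :=
            Finset.sum_le_sum fun k _ => Ffun_abs_le G lam (hpos u hu) k
        _ = C := by simp [hCdef, Finset.sum_const, Finset.card_univ]; ring
    have := (convex_Ici (0:ℝ)).norm_image_sub_le_of_norm_hasDerivWithin_le
      (f := fun u => ∑ j, z u j) (f' := fun u => ∑ k, Ffun G lam (phi G (z u)) k)
      (fun u hu => hSsum_deriv u hu) hb Set.self_mem_Ici hs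
    rw [hSeq s hs, hSeq 0 le_rfl]
    have habs : |(∑ j, z s j) - ∑ j, z 0 j| ≤ C * s := by
      simpa [abs_of_nonneg hs] using this
    linarith [abs_le.mp habs |>.2]
  -- the time change
  set g : ℝ → ℝ := fun s => (S s)⁻¹ with hgdef
  have hgc : Continuous g := hSc.inv₀ fun s => (hSpos s).ne'
  have hgpos : ∀ s, 0 < g s := fun s => inv_pos.mpr (hSpos s)
  set τ : ℝ → ℝ := fun s => ∫ u in (0:ℝ)..s, g u with hτdef
  have hτd : ∀ s, HasDerivAt τ (g s) s := by
    intro s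
    exact intervalIntegral.integral_hasDerivAt_right (hgc.intervalIntegrable _ _)
      (hgc.stronglyMeasurableAtFilter _ _) hgc.continuousAt
  have hτmono : StrictMono τ := strictMono_of_hasDerivAt_pos hτd hgpos
  have hτc : Continuous τ := by
    rw [continuous_iff_continuousAt]; exact fun s => (hτd s).continuousAt
  have hτ0 : τ 0 = 0 := intervalIntegral.integral_same
  -- tendsto atTop
  have hτtop : Filter.Tendsto τ Filter.atTop Filter.atTop := by
    set h : ℝ → ℝ := fun u => C⁻¹ * Real.log (S 0 + C * u) with hhdef
    have hd : ∀ u : ℝ, 0 ≤ u → HasDerivAt h ((S 0 + C * u)⁻¹) u := by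
      intro u hu
      have hpos' : 0 < S 0 + C * u := by
        have := hSpos 0; nlinarith
      have h1 : HasDerivAt (fun v : ℝ => S 0 + C * v) C u := by
        simpa using ((hasDerivAt_id u).const_mul C).const_add (S 0)
      have h2 : HasDerivAt (fun v : ℝ => Real.log (S 0 + C * v)) ((S 0 + C * u)⁻¹ * C) u :=
        by have := (Real.hasDerivAt_log hpos'.ne').comp u h1; exact this
      have := h2.const_mul C⁻¹
      refine this.congr_deriv ?_
      rw [mul_comm ((S 0 + C * u)⁻¹) C, ← mul_assoc, inv_mul_cancel₀ hCpos.ne', one_mul]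
    have hcomp : ∀ s, 0 ≤ s → h s - h 0 ≤ τ s := by
      intro s hs
      have hint : ∀ u ∈ Set.uIcc (0:ℝ) s, 0 < S 0 + C * u := by
        intro u hu
        rw [Set.uIcc_of_le hs] at hu
        have := hSpos 0; nlinarith [hu.1]
      have heq : (∫ u in (0:ℝ)..s, (S 0 + C * u)⁻¹) = h s - h 0 :=
        intervalIntegral.integral_eq_sub_of_hasDerivAt
          (fun u hu => hd u (by rw [Set.uIcc_of_le hs] at hu; exact hu.1))
          (ContinuousOn.intervalIntegrable (by
            exact ContinuousOn.inv₀ (by fun_prop) (fun u hu => (hint u hu).ne')))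
      rw [← heq, hτdef]
      apply intervalIntegral.integral_mono_on hs
      · exact ContinuousOn.intervalIntegrable (by
          exact ContinuousOn.inv₀ (by fun_prop) (fun u hu => (hint u hu).ne'))
      · exact hgc.intervalIntegrable _ _
      · intro u hu
        have hu0 : 0 ≤ u := hu.1
        have h1 : S u ≤ S 0 + C * u := hSle u hu0
        exact inv_anti₀ (hSpos u) h1
    have hhtop : Filter.Tendsto (fun s => h s - h 0) Filter.atTop Filter.atTop := by
      apply Filter.tendsto_atTop_add_const_right
      apply Filter.Tendsto.const_mul_atTop (inv_pos.mpr hCpos)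
      apply Real.tendsto_log_atTop.comp
      apply Filter.tendsto_atTop_add_const_left
      exact (Filter.tendsto_id.const_mul_atTop hCpos)
    exact Filter.tendsto_atTop_mono' _ ((Filter.eventually_ge_atTop 0).mono hcomp) hhtop
  -- tendsto atBot
  have hτbot : Filter.Tendsto τ Filter.atBot Filter.atBot := by
    have heq : ∀ s : ℝ, s ≤ 0 → τ s = s * (S 0)⁻¹ := by
      intro s hs
      have : ∀ u ∈ Set.uIcc (0:ℝ) s, g u = (S 0)⁻¹ := by
        intro u hu
        rw [Set.uIcc_of_ge hs] at hu
        have : max u 0 = 0 := max_eq_right hu.2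
        simp [hgdef, hSdef, this]
      show (∫ u in (0:ℝ)..s, g u) = s * (S 0)⁻¹
      rw [intervalIntegral.integral_congr this]
      simp [smul_eq_mul]
    have : Filter.Tendsto (fun s : ℝ => s * (S 0)⁻¹) Filter.atBot Filter.atBot :=
      Filter.Tendsto.atBot_mul_const (inv_pos.mpr (hSpos 0)) Filter.tendsto_id
    exact Filter.Tendsto.congr' (by
      filter_upwards [Filter.eventually_le_atBot (0:ℝ)] with s hs
      exact (heq s hs).symm) this
  have hτsurj : Function.Surjective τ := hτc.surjective hτtop hτbot
  set e : ℝ ≃o ℝ := StrictMono.orderIsoOfSurjective τ hτmono hτsurj with hedef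
  set ν : ℝ → ℝ := fun t => e.symm t with hνdef
  have hτν : ∀ t, τ (ν t) = t := fun t => e.apply_symm_apply t
  have hντ : ∀ s, ν (τ s) = s := fun s => e.symm_apply_apply s
  have hνmono : StrictMono ν := e.symm.strictMono
  have hνc : Continuous ν := e.symm.continuous
  have hν0 : ν 0 = 0 := by have := hντ 0; rwa [hτ0] at this
  have hνnonneg : ∀ t, 0 ≤ t → 0 ≤ ν t := by
    intro t ht
    rw [← hν0]
    exact hνmono.monotone ht
  have hνd : ∀ t, HasDerivAt ν (S (ν t)) t := by
    intro t
    have := HasDerivAt.of_local_left_inverse hνc.continuousAt (hτd (ν t))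
      (hgpos (ν t)).ne' (Filter.Eventually.of_forall hτν)
    simpa [hgdef] using this
  refine ⟨ν, ⟨fun t ht => hνnonneg t ht, hνmono.injective.injOn, ?_⟩, hνmono.strictMonoOn _,
    hνc.continuousOn, ?_, ?_⟩
  · -- SurjOn
    intro s hs
    refine ⟨τ s, ?_, hντ s⟩
    rw [Set.mem_Ici, ← hτ0]
    exact hτmono.monotone hs
  · -- derivative of ν
    intro t ht
    have := (hνd t).hasDerivWithinAt (s := Set.Ici 0)
    rwa [hSeq _ (hνnonneg t ht)] at this
  · -- derivative of w
    intro t ht w hw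
    set s0 := ν t with hs0def
    have hs0 : 0 ≤ s0 := hνnonneg t ht
    set B : ℝ := ∑ j, z s0 j with hBdef
    have hBpos : 0 < B := Finset.sum_pos (fun j _ => hpos _ hs0 j) Finset.univ_nonempty
    set F : Fin K → ℝ := Ffun G lam (phi G (z s0)) with hFdef
    have hνdW : HasDerivWithinAt ν B (Set.Ici 0) t := by
      have := (hνd t).hasDerivWithinAt (s := Set.Ici 0)
      rwa [hSeq _ hs0, ← hBdef] at this
    have hmaps : Set.MapsTo ν (Set.Ici 0) (Set.Ici 0) := fun u hu => hνnonneg u hu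
    have hA : HasDerivWithinAt (fun u => z (ν u)) (B • F) (Set.Ici 0) t := by
      have := HasDerivWithinAt.scomp_of_eq t (hderiv s0 hs0) hνdW hmaps rfl
      exact this
    have hB : HasDerivWithinAt (fun u => ∑ j, z (ν u) j) (B * ∑ k, F k) (Set.Ici 0) t := by
      have := HasDerivWithinAt.fun_sum (u := Finset.univ)
        (fun j _ => (hasDerivWithinAt_pi.mp hA) j)
      refine this.congr_deriv ?_
      simp [Finset.mul_sum]
    have hBinv : HasDerivWithinAt (fun u => (∑ j, z (ν u) j)⁻¹)
        (-(B * ∑ k, F k) / B ^ 2) (Set.Ici 0) t := by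
      exact hB.inv (by rw [← hBdef]; exact hBpos.ne')
    have hfinal := hBinv.smul hA
    have hwF : Ffun G lam (phi G w) = F := by
      rw [hw, phi_smul G (inv_ne_zero hBpos.ne') (z s0), hFdef]
    have hveq : (∑ j, z (ν t) j)⁻¹ • (B • F) + (-(B * ∑ k, F k) / B ^ 2) • z (ν t)
        = Ffun G lam (phi G w) - (∑ k, Ffun G lam (phi G w) k) • w := by
      rw [hwF, hw, ← hBdef]
      funext i
      simp only [Pi.add_apply, Pi.smul_apply, Pi.sub_apply, smul_eq_mul]
      field_simp
      ring
    rw [← hveq]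
    exact hfinal
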